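/- The set of Banach limits, i.e., linear functionals m on the space ℓ∞ of bounded real sequences satisfying m(x) ≥ 0 whenever x ≥ 0, m(1) = 1, and m(x) = m(n ↦ x(n+1)) for all x ∈ ℓ∞, has cardinality 2^(2^ℵ₀). -/

import Mathlib

open Filter Set Nat Topology

namespace St11
noncomputable section

abbrev L := lp (fun _ : ℕ => ℝ) ⊤

def oneSeq : L := ⟨fun _ => 1, memℓp_infty ⟨1, by rintro x ⟨i, rfl⟩; simp⟩⟩

instance : Nontrivial L := by
  refine ⟨0, oneSeq, fun h => ?_⟩
  have := congrArg (fun f : L => (f : ℕ → ℝ) 0) h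
  simp only [oneSeq] at this
  exact absurd this.symm one_ne_zero

lemma abs_apply_le (f : L) (n : ℕ) : |f n| ≤ ‖f‖ := by
  have := lp.norm_apply_le_norm (E := fun _ : ℕ => ℝ) ENNReal.top_ne_zero f n
  rwa [Real.norm_eq_abs] at this

/-- Cesàro mean. -/
def ces (f : ℕ → ℝ) (n : ℕ) : ℝ := (∑ i ∈ Finset.range n, f i) / n

def ev (k : ℕ) : ℕ := (k + 2)!

lemma ev_pos (k : ℕ) : 0 < ev k := Nat.factorial_pos _

lemma tendsto_ev : Tendsto (fun k => (ev k : ℝ)) atTop atTop := by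
  refine tendsto_natCast_atTop_atTop.comp ?_
  refine tendsto_atTop_mono (fun k => ?_) tendsto_id
  calc (k : ℕ) ≤ k + 2 := by omega
    _ ≤ (k + 2)! := Nat.self_le_factorial _

def seq (f : L) (k : ℕ) : ℝ := ces (⇑f) (ev k)

lemma abs_ces_le (f : L) (n : ℕ) : |ces (⇑f) n| ≤ ‖f‖ := by
  rcases Nat.eq_zero_or_pos n with h | h
  · simp [ces, h, norm_nonneg]
  · have h1 : |∑ i ∈ Finset.range n, f i| ≤ n * ‖f‖ := by
      calc |∑ i ∈ Finset.range n, f i| ≤ ∑ i ∈ Finset.range n, |f i| :=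
            Finset.abs_sum_le_sum_abs _ _
        _ ≤ ∑ i ∈ Finset.range n, ‖f‖ := Finset.sum_le_sum fun i _ => abs_apply_le f i
        _ = n * ‖f‖ := by simp
    rw [ces, abs_div]
    rw [div_le_iff₀ (by positivity)]
    simpa [abs_of_pos (show (0:ℝ) < n by exact_mod_cast h), mul_comm] using h1

/-- The limit along an ultrafilter of the Cesàro means at factorial points. -/
def mfun (U : Ultrafilter ℕ) (f : L) : ℝ := limUnder ↑U (seq f)

lemma tendsto_mfun (U : Ultrafilter ℕ) (f : L) :
    Tendsto (seq f) ↑U (𝓝 (mfun U f)) := by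
  obtain ⟨a, -, ha⟩ := (isCompact_Icc (a := -‖f‖) (b := ‖f‖)).ultrafilter_le_nhds
      (U.map (seq f)) (by
        refine le_principal_iff.2 ?_
        refine Filter.mem_map.2 ?_
        refine Filter.univ_mem' fun k => ?_
        exact abs_le.1 (abs_ces_le f (ev k)))
  have ht : Tendsto (seq f) ↑U (𝓝 a) := ha
  rwa [mfun, ht.limUnder_eq]

lemma mfun_add (U : Ultrafilter ℕ) (f g : L) : mfun U (f + g) = mfun U f + mfun U g := by
  have h : Tendsto (seq (f + g)) ↑U (𝓝 (mfun U f + mfun U g)) := by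
    have := (tendsto_mfun U f).add (tendsto_mfun U g)
    refine this.congr fun k => ?_
    simp only [seq, ces]
    rw [← add_div]
    congr 1
    rw [← Finset.sum_add_distrib]
    refine Finset.sum_congr rfl fun i _ => ?_
    rw [lp.coeFn_add]; rfl
  exact h.limUnder_eq

lemma mfun_smul (U : Ultrafilter ℕ) (c : ℝ) (f : L) : mfun U (c • f) = c * mfun U f := by
  have h : Tendsto (seq (c • f)) ↑U (𝓝 (c * mfun U f)) := by
    have := (tendsto_mfun U f).const_mul c
    refine this.congr fun k => ?_
    simp only [seq, ces]
    rw [← mul_div_assoc, Finset.mul_sum]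
    exact congrArg (fun s => s / ((ev k : ℝ))) (Finset.sum_congr rfl fun i _ => by rw [lp.coeFn_smul]; rfl)
  exact h.limUnder_eq

/-- The Banach limit as a linear map. -/
def mlin (U : Ultrafilter ℕ) : L →ₗ[ℝ] ℝ where
  toFun := mfun U
  map_add' := mfun_add U
  map_smul' := mfun_smul U

lemma mlin_pos (U : Ultrafilter ℕ) (f : L) (hf : ∀ n, 0 ≤ f n) : 0 ≤ mlin U f := by
  refine ge_of_tendsto (tendsto_mfun U f) (Filter.univ_mem' fun k => ?_)
  exact div_nonneg (Finset.sum_nonneg fun i _ => hf i) (Nat.cast_nonneg _)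

lemma mlin_one (U : Ultrafilter ℕ) (f : L) (hf : ∀ n, f n = 1) : mlin U f = 1 := by
  have h : Tendsto (seq f) ↑U (𝓝 1) := by
    refine tendsto_const_nhds.congr fun k => ?_
    have hpos : (0:ℝ) < (ev k : ℝ) := by exact_mod_cast ev_pos k
    simp only [seq, ces]
    rw [Finset.sum_congr rfl fun i _ => hf i, Finset.sum_const, Finset.card_range]
    field_simp
    simp
  exact h.limUnder_eq

lemma mlin_shift (U : Ultrafilter ℕ) (hU : (U : Filter ℕ) ≤ cofinite) (f g : L)
    (hg : ∀ n, g n = f (n + 1)) : mlin U g = mlin U f := by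
  have key : ∀ k, |seq g k - seq f k| ≤ 2 * ‖f‖ / (ev k : ℝ) := by
    intro k
    have hpos : (0:ℝ) < (ev k : ℝ) := by exact_mod_cast ev_pos k
    have hsum : ∑ i ∈ Finset.range (ev k), g i
        = ∑ i ∈ Finset.range (ev k), f i + (f (ev k) - f 0) := by
      have h1 : ∑ i ∈ Finset.range (ev k), g i = ∑ i ∈ Finset.range (ev k), f (i + 1) :=
        Finset.sum_congr rfl fun i _ => hg i
      have h2 : ∑ i ∈ Finset.range (ev k + 1), f i
          = ∑ i ∈ Finset.range (ev k), f (i + 1) + f 0 := Finset.sum_range_succ' _ _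
      have h3 : ∑ i ∈ Finset.range (ev k + 1), f i
          = ∑ i ∈ Finset.range (ev k), f i + f (ev k) := Finset.sum_range_succ _ _
      rw [h1]
      have := h2.symm.trans h3
      linarith
    have : seq g k - seq f k = (f (ev k) - f 0) / (ev k : ℝ) := by
      simp only [seq, ces, hsum]
      ring
    rw [this, abs_div, abs_of_pos hpos]
    gcongr
    calc |f (ev k) - f 0| ≤ |f (ev k)| + |f 0| := abs_sub _ _
      _ ≤ ‖f‖ + ‖f‖ := add_le_add (abs_apply_le f _) (abs_apply_le f _)
      _ = 2 * ‖f‖ := by ring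
  have hdiff : Tendsto (fun k => seq g k - seq f k) atTop (𝓝 0) := by
    refine squeeze_zero_norm (a := fun k => 2 * ‖f‖ / (ev k : ℝ)) (fun k => ?_) ?_
    · rw [Real.norm_eq_abs]; exact key k
    · exact Tendsto.div_atTop tendsto_const_nhds tendsto_ev
  have hdiffU : Tendsto (fun k => seq g k - seq f k) ↑U (𝓝 0) :=
    hdiff.mono_left (hU.trans_eq Nat.cofinite_eq_atTop)
  have h : Tendsto (seq g) ↑U (𝓝 (mfun U f)) := by
    have := (tendsto_mfun U f).add hdiffU
    rw [add_zero] at this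
    exact this.congr fun k => by ring
  exact h.limUnder_eq
section Blocks
open Classical in
/-- Indicator of the union of the blocks `[(k+1)!, (k+2)!)` for `k ∈ S`. -/
def fS (S : Set ℕ) : ℕ → ℝ := fun i =>
  if Nat.findGreatest (fun k => (k + 1)! ≤ i) i ∈ S then 1 else 0

def blk (i : ℕ) : ℕ := Nat.findGreatest (fun k => (k + 1)! ≤ i) i

open Classical in
lemma fS_def (S : Set ℕ) (i : ℕ) : fS S i = if blk i ∈ S then 1 else 0 := rfl

lemma blk_eq (k i : ℕ) (h1 : (k + 1)! ≤ i) (h2 : i < (k + 2)!) : blk i = k := by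
  classical
  rw [blk, Nat.findGreatest_eq_iff]
  refine ⟨?_, fun _ => h1, fun n hn _ hP => ?_⟩
  · calc k ≤ k + 1 := Nat.le_succ _
      _ ≤ (k + 1)! := Nat.self_le_factorial _
      _ ≤ i := h1
  · have : (k + 2)! ≤ (n + 1)! := Nat.factorial_le (by omega)
    omega

lemma fS_mem (S : Set ℕ) : Memℓp (fS S) ⊤ := by
  refine memℓp_infty ⟨1, ?_⟩
  rintro x ⟨i, rfl⟩
  show ‖fS S i‖ ≤ 1
  rw [fS_def]
  split <;> simp

def fSlp (S : Set ℕ) : L := ⟨fS S, fS_mem S⟩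

open Classical in
lemma sum_fS (S : Set ℕ) (k : ℕ) :
    ∑ i ∈ Finset.range (ev k), fS S i
      = (∑ i ∈ Finset.range ((k + 1)!), fS S i)
        + ((k + 2)! - (k + 1)! : ℕ) * (if k ∈ S then (1:ℝ) else 0) := by
  have hle : (k + 1)! ≤ (k + 2)! := Nat.factorial_le (by omega)
  rw [show ev k = (k + 2)! from rfl, ← Finset.sum_range_add_sum_Ico _ hle]
  congr 1
  have hval : ∀ i ∈ Finset.Ico ((k + 1)!) ((k + 2)!), fS S i = if k ∈ S then (1:ℝ) else 0 := by
    intro i hi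
    rw [Finset.mem_Ico] at hi
    rw [fS_def, blk_eq k i hi.1 hi.2]
  rw [Finset.sum_congr rfl hval, Finset.sum_const, Nat.card_Ico, nsmul_eq_mul]

open Classical in
lemma seq_fS_close (S : Set ℕ) (k : ℕ) :
    |seq (fSlp S) k - (if k ∈ S then (1:ℝ) else 0)| ≤ 1 / (k + 1 : ℝ) := by
  have hcoe : ⇑(fSlp S) = fS S := rfl
  have h1pos : 0 < ((k + 1)! : ℝ) := by exact_mod_cast Nat.factorial_pos _
  have h2pos : (0:ℝ) < ((k + 2)! : ℝ) := by exact_mod_cast Nat.factorial_pos _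
  have hle : ((k + 1)! : ℕ) ≤ (k + 2)! := Nat.factorial_le (by omega)
  have hcast : (((k + 2)! - (k + 1)! : ℕ) : ℝ) = ((k + 2)! : ℝ) - ((k + 1)! : ℝ) :=
    Nat.cast_sub hle
  have he1 : 0 ≤ ∑ i ∈ Finset.range ((k + 1)!), fS S i := by
    refine Finset.sum_nonneg fun i _ => ?_
    rw [fS_def]; split <;> norm_num
  have he2 : ∑ i ∈ Finset.range ((k + 1)!), fS S i ≤ ((k + 1)! : ℝ) := by
    calc ∑ i ∈ Finset.range ((k + 1)!), fS S i
        ≤ ∑ i ∈ Finset.range ((k + 1)!), 1 := by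
          refine Finset.sum_le_sum fun i _ => ?_
          rw [fS_def]; split <;> norm_num
      _ = ((k + 1)! : ℝ) := by simp
  have hseq : seq (fSlp S) k
      = ((∑ i ∈ Finset.range ((k + 1)!), fS S i)
          + (((k + 2)! : ℝ) - ((k + 1)! : ℝ)) * (if k ∈ S then (1:ℝ) else 0))
        / ((k + 2)! : ℝ) := by
    rw [seq, ces, hcoe, sum_fS S k, hcast]
    rfl
  set e := ∑ i ∈ Finset.range ((k + 1)!), fS S i with he
  set N1 := ((k + 1)! : ℝ)
  set N2 := ((k + 2)! : ℝ)
  have key : |seq (fSlp S) k - (if k ∈ S then (1:ℝ) else 0)| ≤ N1 / N2 := by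
    rw [hseq]
    split
    · have hdiff : (e + (N2 - N1) * 1) / N2 - 1 = (e - N1) / N2 := by
        field_simp
        ring
      rw [hdiff, abs_div, abs_of_pos h2pos]
      gcongr
      rw [abs_le]
      constructor <;> linarith
    · rw [sub_zero, mul_zero, add_zero, abs_div, abs_of_pos h2pos]
      gcongr
      rw [abs_of_nonneg he1]
      exact he2
  refine key.trans ?_
  rw [div_le_div_iff₀ h2pos (by positivity)]
  have h22 : N2 = (k + 2) * N1 := by
    simp only [N1, N2]
    exact_mod_cast Nat.factorial_succ (k + 1)
  rw [h22]
  nlinarith [h1pos]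

open Classical in
lemma mfun_fS (U : Ultrafilter ℕ) (hU : (U : Filter ℕ) ≤ cofinite) (S : Set ℕ) :
    mfun U (fSlp S) = if S ∈ U then 1 else 0 := by
  set ind : ℕ → ℝ := fun k => if k ∈ S then (1:ℝ) else 0 with hind
  have hdiff : Tendsto (fun k => seq (fSlp S) k - ind k) atTop (𝓝 0) := by
    have hb : Tendsto (fun k : ℕ => 1 / (k + 1 : ℝ)) atTop (𝓝 0) :=
      tendsto_one_div_add_atTop_nhds_zero_nat
    exact squeeze_zero_norm
      (fun k => by rw [Real.norm_eq_abs]; exact seq_fS_close S k) hb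
  have hdiffU : Tendsto (fun k => seq (fSlp S) k - ind k) ↑U (𝓝 0) :=
    hdiff.mono_left (hU.trans_eq Nat.cofinite_eq_atTop)
  have hindU : Tendsto ind ↑U (𝓝 (if S ∈ U then (1:ℝ) else 0)) := by
    split
    · next hS =>
      refine Tendsto.congr' ?_ (tendsto_const_nhds : Tendsto (fun _ : ℕ => (1:ℝ)) ↑U (𝓝 1))
      exact eventually_of_mem hS fun k hk => by simp [hind, hk]
    · next hS =>
      have hSc : Sᶜ ∈ U := Ultrafilter.compl_mem_iff_notMem.2 hS
      refine Tendsto.congr' ?_ (tendsto_const_nhds : Tendsto (fun _ : ℕ => (0:ℝ)) ↑U (𝓝 0))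
      exact eventually_of_mem hSc fun k hk => by
        simp only [hind]
        rw [if_neg (by simpa using hk)]
  have h : Tendsto (seq (fSlp S)) ↑U (𝓝 (if S ∈ U then (1:ℝ) else 0)) := by
    have := hindU.add hdiffU
    rw [add_zero] at this
    exact this.congr fun k => by ring
  exact h.limUnder_eq
end Blocks

section Ultra

abbrev D := Finset ℚ × Finset (Finset ℚ)

def eD : ℕ ≃ D := (Denumerable.eqv D).symm

/-- The independent family on the countable set `D`. -/
def A (x : ℝ) : Set D := {p | p.1.filter (fun q : ℚ => (q : ℝ) < x) ∈ p.2}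

def A' (x : ℝ) : Set ℕ := {n | eD n ∈ A x}

/-- A rational separating `x` and `y` when `x < y`. -/
def rsep (x y : ℝ) : ℚ := if h : x < y then (exists_rat_btwn h).choose else 0

lemma rsep_spec {x y : ℝ} (h : x < y) : x < (rsep x y : ℝ) ∧ ((rsep x y : ℝ)) < y := by
  rw [rsep, dif_pos h]
  exact (exists_rat_btwn h).choose_spec

/-- Independence: any prescribed finite pattern of membership is achieved by
infinitely many points. -/
lemma indep (u : Finset ℝ) (h : ℝ → Bool) :
    {p : D | ∀ x ∈ u, (p ∈ A x ↔ h x = true)}.Infinite := by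
  classical
  set F₀ : Finset ℚ := (u ×ˢ u).image (fun z => rsep z.1 z.2) with hF₀
  set GF : Finset ℚ → Finset (Finset ℚ) :=
    fun F => (u.filter (fun x => h x)).image (fun x => F.filter (fun q : ℚ => (q : ℝ) < x)) with hGF
  have main : ∀ F : Finset ℚ, F₀ ⊆ F → (F, GF F) ∈ {p : D | ∀ x ∈ u, (p ∈ A x ↔ h x = true)} := by
    intro F hF x hx
    constructor
    · intro hmem
      by_contra hfalse
      have hb : h x = false := by
        cases hhx : h x
        · rfl
        · exact absurd hhx hfalse
      have hmem' : F.filter (fun q : ℚ => (q : ℝ) < x) ∈ GF F := hmem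
      obtain ⟨y, hy, hxy⟩ := Finset.mem_image.1 hmem'
      rw [Finset.mem_filter] at hy
      have hne : y ≠ x := fun hcontr => by
        rw [hcontr] at hy
        rw [hy.2] at hb
        exact Bool.true_eq_false.mp hb
      rcases lt_or_gt_of_ne hne with hlt | hgt
      · -- y < x ; separator q ∈ (y, x): q ∈ filter(<x) \ filter(<y)
        obtain ⟨hq1, hq2⟩ := rsep_spec hlt
        have hqF : rsep y x ∈ F := hF (Finset.mem_image.2 ⟨(y, x),
          Finset.mem_product.2 ⟨hy.1, hx⟩, rfl⟩)
        have h1 : rsep y x ∈ F.filter (fun q : ℚ => (q : ℝ) < x) :=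
          Finset.mem_filter.2 ⟨hqF, hq2⟩
        rw [← hxy] at h1
        have := (Finset.mem_filter.1 h1).2
        exact absurd this (not_lt.2 hq1.le)
      · -- x < y
        obtain ⟨hq1, hq2⟩ := rsep_spec hgt
        have hqF : rsep x y ∈ F := hF (Finset.mem_image.2 ⟨(x, y),
          Finset.mem_product.2 ⟨hx, hy.1⟩, rfl⟩)
        have h1 : rsep x y ∈ F.filter (fun q : ℚ => (q : ℝ) < y) :=
          Finset.mem_filter.2 ⟨hqF, hq2⟩
        rw [hxy] at h1
        have := (Finset.mem_filter.1 h1).2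
        exact absurd this (not_lt.2 hq1.le)
    · intro hb
      show F.filter (fun q : ℚ => (q : ℝ) < x) ∈ GF F
      refine Finset.mem_image.2 ⟨x, ?_, rfl⟩
      rw [Finset.mem_filter]
      exact ⟨hx, by simp [hb]⟩
  have hmaps : Set.MapsTo (fun q : ℚ => ((insert q F₀, GF (insert q F₀)) : D))
      ((F₀ : Set ℚ))ᶜ {p : D | ∀ x ∈ u, (p ∈ A x ↔ h x = true)} :=
    fun q _ => main _ (Finset.subset_insert _ _)
  have hinj : Set.InjOn (fun q : ℚ => ((insert q F₀, GF (insert q F₀)) : D))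
      ((F₀ : Set ℚ))ᶜ := by
    intro q hq q' hq' heq
    have h1 : insert q F₀ = insert q' F₀ := congrArg Prod.fst heq
    have : q ∈ insert q' F₀ := h1 ▸ Finset.mem_insert_self q F₀
    rcases Finset.mem_insert.1 this with h | h
    · exact h
    · exact absurd h hq
  have hinf : (((F₀ : Set ℚ))ᶜ).Infinite := (F₀.finite_toSet).infinite_compl
  exact Set.infinite_of_injOn_mapsTo hinj hmaps hinf

def SX (h : ℝ → Bool) (x : ℝ) : Set ℕ := if h x then A' x else (A' x)ᶜ

lemma biInter_SX_infinite (h : ℝ → Bool) (v : Finset ℝ) : (⋂ x ∈ v, SX h x).Infinite := by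
  have hsub : eD ⁻¹' {p : D | ∀ x ∈ v, (p ∈ A x ↔ h x = true)} ⊆ ⋂ x ∈ v, SX h x := by
    intro n hn
    simp only [Set.mem_preimage, Set.mem_setOf_eq] at hn
    refine Set.mem_iInter₂.2 fun x hx => ?_
    by_cases hhx : h x = true
    · rw [SX, if_pos hhx]
      exact (hn x hx).2 hhx
    · rw [SX, if_neg hhx]
      intro hmem
      exact hhx ((hn x hx).1 hmem)
  refine Set.Infinite.mono hsub ?_
  refine Set.Infinite.preimage (indep v h) ?_
  intro p _
  exact ⟨eD.symm p, by simp⟩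

lemma G_neBot (h : ℝ → Bool) :
    Filter.NeBot (cofinite ⊓ Filter.generate (Set.range (SX h))) := by
  classical
  rw [inf_neBot_iff]
  intro s hs t ht
  obtain ⟨w, hwsub, hwfin, hwint⟩ := Filter.mem_generate_iff.1 ht
  -- pick representatives
  have hrep : ∀ y ∈ w, ∃ x : ℝ, SX h x = y := fun y hy => hwsub hy
  set g : Set ℕ → ℝ := fun y => if hy : ∃ x : ℝ, SX h x = y then hy.choose else 0 with hg
  have hgspec : ∀ y ∈ w, SX h (g y) = y := by
    intro y hy
    have hex := hrep y hy
    simp only [hg, dif_pos hex]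
    exact hex.choose_spec
  have hvfin : (g '' w).Finite := hwfin.image g
  set v : Finset ℝ := hvfin.toFinset with hv
  have hsubint : (⋂ x ∈ v, SX h x) ⊆ ⋂₀ w := by
    intro n hn
    refine Set.mem_sInter.2 fun y hy => ?_
    have hgy : g y ∈ v := by
      rw [hv, Set.Finite.mem_toFinset]
      exact ⟨y, hy, rfl⟩
    have := Set.mem_iInter₂.1 hn (g y) hgy
    rwa [hgspec y hy] at this
  have hinf : (⋂ x ∈ v, SX h x).Infinite := biInter_SX_infinite h v
  have hsc : sᶜ.Finite := hs
  obtain ⟨n, hn1, hn2⟩ := (hinf.diff hsc).nonempty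
  refine ⟨n, ?_, hwint (hsubint hn1)⟩
  by_contra hns
  exact hn2 hns

def Uh (h : ℝ → Bool) : Ultrafilter ℕ :=
  @Ultrafilter.of _ (cofinite ⊓ Filter.generate (Set.range (SX h))) (G_neBot h)

lemma Uh_le_cofinite (h : ℝ → Bool) : (Uh h : Filter ℕ) ≤ cofinite := by
  have := @Ultrafilter.of_le _ (cofinite ⊓ Filter.generate (Set.range (SX h))) (G_neBot h)
  exact le_trans this inf_le_left

lemma SX_mem_Uh (h : ℝ → Bool) (x : ℝ) : SX h x ∈ Uh h := by
  have h1 := @Ultrafilter.of_le _ (cofinite ⊓ Filter.generate (Set.range (SX h))) (G_neBot h)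
  have h2 : SX h x ∈ Filter.generate (Set.range (SX h)) :=
    Filter.mem_generate_iff.2 ⟨{SX h x}, by simp, Set.finite_singleton _, by simp⟩
  exact h1 (Filter.mem_inf_of_right h2)

lemma A'_mem_Uh_iff (h : ℝ → Bool) (x : ℝ) : A' x ∈ Uh h ↔ h x = true := by
  by_cases hhx : h x = true
  · have := SX_mem_Uh h x
    rw [SX, if_pos hhx] at this
    simp [this, hhx]
  · have := SX_mem_Uh h x
    rw [SX, if_neg hhx] at this
    have hnot : A' x ∉ Uh h := Ultrafilter.compl_mem_iff_notMem.1 this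
    simp [hnot, hhx]

end Ultra

section Main
open Cardinal

/-- The map from boolean functions on `ℝ` to Banach limits. -/
def Phi (h : ℝ → Bool) : {m : L →ₗ[ℝ] ℝ //
    (∀ f : L, (∀ n, 0 ≤ f n) → 0 ≤ m f) ∧
    (∀ f : L, (∀ n, f n = 1) → m f = 1) ∧
    (∀ f g : L, (∀ n, g n = f (n + 1)) → m g = m f)} :=
  ⟨mlin (Uh h), mlin_pos (Uh h), mlin_one (Uh h),
    fun f g hg => mlin_shift (Uh h) (Uh_le_cofinite h) f g hg⟩

lemma Phi_injective : Function.Injective Phi := by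
  classical
  intro h h' heq
  funext x
  have hval : (Phi h).1 (fSlp (A' x)) = (Phi h').1 (fSlp (A' x)) := by rw [heq]
  have e1 : (Phi h).1 (fSlp (A' x)) = if A' x ∈ Uh h then (1:ℝ) else 0 :=
    mfun_fS (Uh h) (Uh_le_cofinite h) (A' x)
  have e2 : (Phi h').1 (fSlp (A' x)) = if A' x ∈ Uh h' then (1:ℝ) else 0 :=
    mfun_fS (Uh h') (Uh_le_cofinite h') (A' x)
  rw [e1, e2] at hval
  have hiff : A' x ∈ Uh h ↔ A' x ∈ Uh h' := by
    by_cases h1 : A' x ∈ Uh h <;> by_cases h2 : A' x ∈ Uh h' <;>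
      simp [h1, h2] at hval ⊢
  rw [Bool.eq_iff_iff, ← A'_mem_Uh_iff h x, ← A'_mem_Uh_iff h' x]
  exact hiff

lemma mk_L_le : mk L ≤ continuum := by
  calc mk L ≤ mk (ℕ → ℝ) := mk_le_of_injective (f := fun g : L => (g : ℕ → ℝ)) (by
        intro a b hab
        exact Subtype.ext hab)
    _ = mk ℝ ^ mk ℕ := (power_def ℝ ℕ).symm
    _ = continuum ^ aleph0 := by rw [mk_real, mk_nat]
    _ = continuum := continuum_power_aleph0

end Main

theorem statement11' :
    Cardinal.mk {m : lp (fun _ : ℕ => ℝ) ⊤ →ₗ[ℝ] ℝ //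
      (∀ f : lp (fun _ : ℕ => ℝ) ⊤, (∀ n, 0 ≤ f n) → 0 ≤ m f) ∧
      (∀ f : lp (fun _ : ℕ => ℝ) ⊤, (∀ n, f n = 1) → m f = 1) ∧
      (∀ f g : lp (fun _ : ℕ => ℝ) ⊤, (∀ n, g n = f (n + 1)) → m g = m f)} =
    (2 : Cardinal) ^ ((2 : Cardinal) ^ Cardinal.aleph0) := by
  open Cardinal in
  rw [Cardinal.two_power_aleph0]
  refine le_antisymm ?_ ?_
  · calc mk {m : L →ₗ[ℝ] ℝ //
        (∀ f : L, (∀ n, 0 ≤ f n) → 0 ≤ m f) ∧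
        (∀ f : L, (∀ n, f n = 1) → m f = 1) ∧
        (∀ f g : L, (∀ n, g n = f (n + 1)) → m g = m f)}
        ≤ mk (L →ₗ[ℝ] ℝ) := mk_subtype_le _
      _ ≤ mk (L → ℝ) := mk_le_of_injective (f := fun m : L →ₗ[ℝ] ℝ => ⇑m)
          DFunLike.coe_injective
      _ = mk ℝ ^ mk L := (power_def ℝ L).symm
      _ ≤ continuum ^ continuum := by
          rw [mk_real]
          exact power_le_power_left continuum_ne_zero mk_L_le
      _ = (2 ^ aleph0) ^ continuum := by rw [two_power_aleph0]
      _ = 2 ^ (aleph0 * continuum) := (power_mul).symm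
      _ = 2 ^ continuum := by rw [aleph0_mul_continuum]
  · calc (2 : Cardinal) ^ continuum = mk Bool ^ mk ℝ := by rw [mk_bool, mk_real]
      _ = mk (ℝ → Bool) := power_def Bool ℝ
      _ ≤ _ := mk_le_of_injective Phi_injective

end
end St11

/-- The set of Banach limits — positive unital linear functionals on
`ℓ∞` (the bounded real sequences, realized as `lp (fun _ : ℕ => ℝ) ⊤`) invariant under
the shift — has cardinality `2 ^ (2 ^ ℵ₀)`. -/
theorem statement11 :
    Cardinal.mk {m : lp (fun _ : ℕ => ℝ) ⊤ →ₗ[ℝ] ℝ //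
      (∀ f : lp (fun _ : ℕ => ℝ) ⊤, (∀ n, 0 ≤ f n) → 0 ≤ m f) ∧
      (∀ f : lp (fun _ : ℕ => ℝ) ⊤, (∀ n, f n = 1) → m f = 1) ∧
      (∀ f g : lp (fun _ : ℕ => ℝ) ⊤, (∀ n, g n = f (n + 1)) → m g = m f)} =
    (2 : Cardinal) ^ ((2 : Cardinal) ^ Cardinal.aleph0) := by
  exact St11.statement11'
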